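/- If nonnegative integers k_1,...,k_n (not all zero) satisfy (k_1+···+k_n)!/(k_1!···k_n!) = m with m > 1 a prime power, then at most two of the k_i are nonzero. -/

import Mathlib

private lemma aux_le_choose : ∀ n k : ℕ, 1 ≤ k → k < n → n ≤ n.choose k := by
  intro n
  induction n with
  | zero => intro k h1 h2; omega
  | succ m ih =>
    intro k h1 h2
    obtain ⟨j, rfl⟩ : ∃ j, k = j + 1 := ⟨k - 1, by omega⟩
    rw [Nat.choose_succ_succ]
    rcases Nat.eq_or_lt_of_le (show j + 1 ≤ m by omega) with heq | hlt
    · -- j + 1 = m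
      have h3 : m.choose j = m := by
        have : j = m - 1 := by omega
        subst this
        rcases Nat.eq_zero_or_pos m with rfl | hm
        · omega
        · rw [Nat.choose_symm (show 1 ≤ m by omega), Nat.choose_one_right]
      have h5 : m.choose (j + 1) = 1 := by rw [heq, Nat.choose_self]
      simp only [Nat.succ_eq_add_one]
      omega
    · rcases Nat.eq_zero_or_pos j with rfl | hj
      · simp [Nat.choose_one_right]
      · have h4 : m ≤ m.choose (j + 1) := ih (j + 1) (by omega) hlt
        have h5 : 0 < m.choose j := Nat.choose_pos (by omega)
        simp only [Nat.succ_eq_add_one]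
        omega

private lemma aux_lt_choose {N r : ℕ} (h2 : 2 ≤ r) (hN : r + 2 ≤ N) : N < N.choose r := by
  obtain ⟨M, rfl⟩ : ∃ M, N = M + 1 := ⟨N - 1, by omega⟩
  obtain ⟨s, rfl⟩ : ∃ s, r = s + 1 := ⟨r - 1, by omega⟩
  rw [Nat.choose_succ_succ]
  have h3 : M ≤ M.choose s := aux_le_choose M s (by omega) (by omega)
  have h4 : M ≤ M.choose (s + 1) := aux_le_choose M (s + 1) (by omega) (by omega)
  simp only [Nat.succ_eq_add_one]
  omega

private lemma aux_choose_sum_dvd {n : ℕ} (k : Fin n → ℕ) (t : Finset (Fin n)) :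
    (∑ i, k i).choose (∑ i ∈ t, k i) ∣ (∑ i, k i).factorial / ∏ i, (k i).factorial := by
  set N := ∑ i, k i with hN
  set r := ∑ i ∈ t, k i with hr
  have hsplit : r + ∑ i ∈ tᶜ, k i = N := Finset.sum_add_sum_compl t k
  have hrN : r ≤ N := by omega
  have h1 : (∏ i ∈ t, (k i).factorial) ∣ r.factorial :=
    Nat.prod_factorial_dvd_factorial_sum t k
  have h2 : (∏ i ∈ tᶜ, (k i).factorial) ∣ (N - r).factorial := by
    have := Nat.prod_factorial_dvd_factorial_sum tᶜ k
    have heq : ∑ i ∈ tᶜ, k i = N - r := by omega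
    rwa [heq] at this
  have hP : (∏ i, (k i).factorial) ∣ r.factorial * (N - r).factorial := by
    rw [← Finset.prod_mul_prod_compl t]
    exact mul_dvd_mul h1 h2
  obtain ⟨q, hq⟩ := hP
  have hPpos : 0 < ∏ i, (k i).factorial :=
    Finset.prod_pos fun i _ => Nat.factorial_pos _
  have hfac : N.factorial = (∏ i, (k i).factorial) * (N.choose r * q) := by
    rw [← Nat.choose_mul_factorial_mul_factorial hrN, mul_assoc, hq]
    ring
  rw [hfac, Nat.mul_div_cancel_left _ hPpos]
  exact Dvd.intro q rfl

theorem multinomial_prime_pow_at_most_two_nonzero (n m : ℕ) (k : Fin n → ℕ)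
    (hne : ∃ i, k i ≠ 0) (hm : 1 < m) (hpp : IsPrimePow m)
    (h : (∑ i, k i).factorial / ∏ i, (k i).factorial = m) :
    (Finset.univ.filter fun i => k i ≠ 0).card ≤ 2 := by
  by_contra hcard
  push_neg at hcard
  obtain ⟨i, j, l, hi, hj, hl, hij, hil, hjl⟩ := Finset.two_lt_card_iff.mp hcard
  simp only [Finset.mem_filter] at hi hj hl
  have hki : 1 ≤ k i := Nat.one_le_iff_ne_zero.mpr hi.2
  have hkj : 1 ≤ k j := Nat.one_le_iff_ne_zero.mpr hj.2
  have hkl : 1 ≤ k l := Nat.one_le_iff_ne_zero.mpr hl.2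
  set N := ∑ x, k x with hNdef
  -- sum over the three indices is at most N
  have hsum3 : k i + k j + k l ≤ N := by
    have hsub : ({i, j, l} : Finset (Fin n)) ⊆ Finset.univ := Finset.subset_univ _
    have := Finset.sum_le_sum_of_subset (f := k) hsub
    rw [Finset.sum_insert (by simp [hij, hil]), Finset.sum_pair hjl, ← hNdef] at this
    omega
  -- the main engine: a subset with suitable sum gives a contradiction
  have main : ∀ t : Finset (Fin n),
      2 ≤ ∑ x ∈ t, k x → (∑ x ∈ t, k x) + 2 ≤ N → False := by
    intro t h2 hN2
    set r := ∑ x ∈ t, k x with hrdef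
    have hdvd := aux_choose_sum_dvd k t
    rw [← hNdef, ← hrdef, h] at hdvd
    obtain ⟨p, a, hp, ha, hpa⟩ := (isPrimePow_nat_iff m).mp hpp
    rw [← hpa] at hdvd
    obtain ⟨s, _, hcs⟩ := (Nat.dvd_prime_pow hp).mp hdvd
    have hfact : (N.choose r).factorization p = s := by
      rw [hcs, hp.factorization_pow, Finsupp.single_eq_same]
    have hle : N.choose r ≤ N := by
      have := Nat.pow_factorization_choose_le (p := p) (n := N) (k := r) (by omega)
      rw [hfact, ← hcs] at this
      exact this
    exact absurd hle (not_le.mpr (aux_lt_choose h2 hN2))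
  -- case analysis
  by_cases hbig : 2 ≤ k i ∨ 2 ≤ k j ∨ 2 ≤ k l
  · rcases hbig with hb | hb | hb
    · exact main {j, l} (by rw [Finset.sum_pair hjl]; omega)
        (by rw [Finset.sum_pair hjl]; omega)
    · exact main {i, l} (by rw [Finset.sum_pair hil]; omega)
        (by rw [Finset.sum_pair hil]; omega)
    · exact main {i, j} (by rw [Finset.sum_pair hij]; omega)
        (by rw [Finset.sum_pair hij]; omega)
  · push_neg at hbig
    have hki1 : k i = 1 := by omega
    have hkj1 : k j = 1 := by omega
    have hkl1 : k l = 1 := by omega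
    by_cases hN4 : 4 ≤ N
    · exact main {i, j} (by rw [Finset.sum_pair hij]; omega)
        (by rw [Finset.sum_pair hij]; omega)
    · -- N = 3, all other k's are zero, m = 6
      have hN3 : N = 3 := by omega
      have hzero : ∀ x, k x ≤ 1 := by
        intro x
        by_cases hx : x = i ∨ x = j ∨ x = l
        · rcases hx with rfl | rfl | rfl <;> omega
        · push_neg at hx
          have hsub : ({x, i, j, l} : Finset (Fin n)) ⊆ Finset.univ := Finset.subset_univ _
          have h4 := Finset.sum_le_sum_of_subset (f := k) hsub
          rw [Finset.sum_insert (by simp [hx.1, hx.2.1, hx.2.2]),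
            Finset.sum_insert (by simp [hij, hil]), Finset.sum_pair hjl, ← hNdef] at h4
          omega
      have hprod : (∏ x, (k x).factorial) = 1 := by
        apply Finset.prod_eq_one
        intro x _
        rcases Nat.le_one_iff_eq_zero_or_eq_one.mp (hzero x) with h0 | h0 <;> simp [h0]
      rw [hN3, hprod] at h
      norm_num [Nat.factorial] at h
      have hm6 : m = 6 := by omega
      rw [hm6] at hpp
      exact absurd hpp (by decide)
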